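/- The minimum of |z| over all complex roots z of the polynomial q⁶ + 2q⁵ + 3q⁴ + 3q² + 2q + 1 lies strictly between R_* = (3−√5)/2 and R_{√2} = (1 + √2 − √(2√2 − 1))/2; that is, R_* < R_{√3} < R_{√2}, where R_{√3} denotes this minimal root modulus (the radius of convergence of [√3]_q). -/

import Mathlib

open Polynomial

/-- `R_* = (3 − √5)/2`. -/
noncomputable def Rstar : ℝ := (3 - Real.sqrt 5) / 2

/-- `R_{√2} = (1 + √2 − √(2√2 − 1))/2`. -/
noncomputable def Rsqrt2 : ℝ := (1 + Real.sqrt 2 - Real.sqrt (2 * Real.sqrt 2 - 1)) / 2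

noncomputable def P : ℂ[X] := X ^ 6 + C 2 * X ^ 5 + C 3 * X ^ 4 + C 3 * X ^ 2 + C 2 * X + 1

lemma P_monic : P.Monic := by unfold P; monicity!

lemma P_natDegree : P.natDegree = 6 := by unfold P; compute_degree!

lemma P_ne_zero : P ≠ 0 := P_monic.ne_zero

lemma P_eval (z : ℂ) : P.eval z = z ^ 6 + 2 * z ^ 5 + 3 * z ^ 4 + 3 * z ^ 2 + 2 * z + 1 := by
  simp [P]

lemma P_card_roots : Multiset.card P.roots = 6 := by
  rw [← P_natDegree]
  exact (Polynomial.splits_iff_card_roots).mp (IsAlgClosed.splits P)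

lemma P_eq_prod : P = (P.roots.map fun a => X - C a).prod :=
  (IsAlgClosed.splits P).eq_prod_roots_of_monic P_monic

lemma prod_lb (s : Multiset ℂ) (c : ℝ) (hc : 0 ≤ c) (h : ∀ x ∈ s, c ≤ ‖x‖) :
    c ^ Multiset.card s ≤ ‖s.prod‖ := by
  induction s using Multiset.induction_on with
  | empty => simp
  | cons a s ih =>
    simp only [Multiset.prod_cons, Multiset.card_cons, pow_succ, norm_mul]
    have h1 : c ≤ ‖a‖ := h a (Multiset.mem_cons_self a s)
    have h2 : c ^ Multiset.card s ≤ ‖s.prod‖ := ih fun x hx => h x (Multiset.mem_cons_of_mem hx)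
    have := mul_le_mul h2 h1 hc (norm_nonneg _)
    linarith [this]

/- numeric bounds on the two constants -/
lemma Rstar_lt : Rstar < 382 / 1000 := by
  have h5 : Real.sqrt 5 ^ 2 = 5 := Real.sq_sqrt (by norm_num)
  have h5n : 0 ≤ Real.sqrt 5 := Real.sqrt_nonneg 5
  rw [Rstar]
  nlinarith [sq_nonneg (Real.sqrt 5 - 2236/1000), sq_nonneg (Real.sqrt 5 + 2236/1000)]

lemma Rsqrt2_gt : (531009 : ℝ) / 1000000 ≤ Rsqrt2 := by
  have h2 : Real.sqrt 2 ^ 2 = 2 := Real.sq_sqrt (by norm_num)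
  have h2n : 0 ≤ Real.sqrt 2 := Real.sqrt_nonneg 2
  have h2l : (14142135623 : ℝ) / 10^10 ≤ Real.sqrt 2 := by
    nlinarith [sq_nonneg (Real.sqrt 2 - 14142135623 / 10^10), sq_nonneg (Real.sqrt 2 + 14142135623 / 10^10)]
  have h2u : Real.sqrt 2 ≤ (14142135624 : ℝ) / 10^10 := by
    nlinarith [sq_nonneg (Real.sqrt 2 - 14142135624 / 10^10), sq_nonneg (Real.sqrt 2 + 14142135624 / 10^10)]
  have hargn : (0:ℝ) ≤ 2 * Real.sqrt 2 - 1 := by nlinarith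
  have hb : Real.sqrt (2 * Real.sqrt 2 - 1) ≤ (13521935002 : ℝ) / 10^10 := by
    rw [show ((13521935002 : ℝ) / 10^10) = Real.sqrt ((13521935002 / 10^10)^2) by
      rw [Real.sqrt_sq (by norm_num)]]
    apply Real.sqrt_le_sqrt
    nlinarith
  rw [Rsqrt2]
  nlinarith

/- every root has norm > Rstar -/
lemma root_norm_gt (w : ℂ) (hw : w ^ 6 + 2 * w ^ 5 + 3 * w ^ 4 + 3 * w ^ 2 + 2 * w + 1 = 0) :
    Rstar < ‖w‖ := by
  by_contra hcon
  push_neg at hcon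
  have hr0 : (0:ℝ) ≤ ‖w‖ := norm_nonneg w
  have hrle : ‖w‖ ≤ 382 / 1000 := le_trans hcon Rstar_lt.le
  set r : ℝ := ‖w‖ with hr
  have hid : (1 + w) ^ 2 * (1 + w ^ 4) = -(2 * w ^ 2 * (1 + w ^ 2)) := by
    linear_combination hw
  have hnorm : ‖1 + w‖ ^ 2 * ‖1 + w ^ 4‖ = 2 * r ^ 2 * ‖1 + w ^ 2‖ := by
    have h := congrArg norm hid
    simp only [norm_neg, norm_mul, norm_pow, RCLike.norm_ofNat] at h
    linear_combination h
  have hn1 : (1:ℝ) - r ≤ ‖1 + w‖ := by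
    have := norm_add_le (1 + w) (-w)
    simp only [add_neg_cancel_right, norm_neg, norm_one] at this
    linarith
  have hn4 : (1:ℝ) - r ^ 4 ≤ ‖1 + w ^ 4‖ := by
    have := norm_add_le (1 + w ^ 4) (-(w ^ 4))
    simp only [add_neg_cancel_right, norm_neg, norm_one, norm_pow] at this
    linarith
  have hn2 : ‖1 + w ^ 2‖ ≤ 1 + r ^ 2 := by
    have := norm_add_le (1 : ℂ) (w ^ 2)
    simp only [norm_one, norm_pow] at this
    linarith
  have h1r : (0:ℝ) ≤ 1 - r := by linarith
  have h4r : (0:ℝ) ≤ 1 - r ^ 4 := by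
    have h2 : r ^ 2 ≤ 1 := by nlinarith
    nlinarith [sq_nonneg r]
  have key : (1 - r) ^ 2 * (1 - r ^ 4) ≤ 2 * r ^ 2 * (1 + r ^ 2) := by
    have hA : (1 - r) ^ 2 ≤ ‖1 + w‖ ^ 2 := by nlinarith [norm_nonneg (1 + w)]
    have hB : (1 - r) ^ 2 * (1 - r ^ 4) ≤ ‖1 + w‖ ^ 2 * ‖1 + w ^ 4‖ :=
      mul_le_mul hA hn4 h4r (by positivity)
    have hC : 2 * r ^ 2 * ‖1 + w ^ 2‖ ≤ 2 * r ^ 2 * (1 + r ^ 2) := by nlinarith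
    linarith [hnorm]
  nlinarith [key, sq_nonneg r, sq_nonneg (1 - r), mul_nonneg hr0 hr0,
    mul_nonneg (mul_nonneg hr0 hr0) hr0, sq_nonneg (r * r), sq_nonneg (r * r * r),
    mul_nonneg (mul_nonneg (mul_nonneg hr0 hr0) hr0) hr0]

/- the explicit approximate root -/
noncomputable def a0 : ℝ := (-3409767434469085653 : ℝ) / 10000000000000000000
noncomputable def b0 : ℝ := (-4028155257993092639 : ℝ) / 10000000000000000000
noncomputable def x0 : ℂ := ⟨a0, b0⟩

noncomputable def r2 : ℝ := (-574940103166438549500731160223193489 : ℝ) / 12500000000000000000000000000000000000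
noncomputable def i2 : ℝ := (13735072619690265316988391656054808267 : ℝ) / 50000000000000000000000000000000000000
noncomputable def r3 : ℝ := (63168653154111177869414435259550303725095285767645699881 : ℝ) / 500000000000000000000000000000000000000000000000000000000
noncomputable def i3 : ℝ := (-37569611330283937059659270933808648295814379121720983467 : ℝ) / 500000000000000000000000000000000000000000000000000000000
noncomputable def r4 : ℝ := (-183363321912500647630078594008842456847655989939570614885925847233619653353 : ℝ) / 2500000000000000000000000000000000000000000000000000000000000000000000000000
noncomputable def i4 : ℝ := (-7896844068963246533555088985928389168292106329337659856325860352337773563 : ℝ) / 312500000000000000000000000000000000000000000000000000000000000000000000000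
noncomputable def r5 : ℝ := (370748572069749451147364507134048315293942135885225015135091140602469055954807744384212822453 : ℝ) / 25000000000000000000000000000000000000000000000000000000000000000000000000000000000000000000000
noncomputable def i5 : ℝ := (954027143216369338458964132643118341501796835251000880369604903331237564958724593234523901679 : ℝ) / 25000000000000000000000000000000000000000000000000000000000000000000000000000000000000000000000
noncomputable def r6 : ℝ := (322350380724475110176456301227340954844579798859819125125998799364935300068684103714561003227562614202079509259 : ℝ) / 31250000000000000000000000000000000000000000000000000000000000000000000000000000000000000000000000000000000000000
noncomputable def i6 : ℝ := (-2373221747257471465801612485948365495076683083805707968355267252139303719297733067651173682241631537728844867427 : ℝ) / 125000000000000000000000000000000000000000000000000000000000000000000000000000000000000000000000000000000000000000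
noncomputable def A : ℝ := (-588563407943081556207664484161016395258492620389629060781796535324906940639937385797920490741 : ℝ) / 31250000000000000000000000000000000000000000000000000000000000000000000000000000000000000000000000000000000000000
noncomputable def B : ℝ := (-19065140522220187079509242326500890992250250641632256345310487135305934665451631537728844867427 : ℝ) / 125000000000000000000000000000000000000000000000000000000000000000000000000000000000000000000000000000000000000000

lemma x0_pow2 : x0 ^ 2 = ⟨r2, i2⟩ := by
  rw [pow_two, Complex.ext_iff]
  constructor <;> simp only [Complex.mul_re, Complex.mul_im, x0] <;>
    norm_num [a0, b0, r2, i2]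

lemma x0_pow3 : x0 ^ 3 = ⟨r3, i3⟩ := by
  rw [pow_succ, x0_pow2, Complex.ext_iff]
  constructor <;> simp only [Complex.mul_re, Complex.mul_im, x0] <;>
    norm_num [a0, b0, r2, i2, r3, i3]

lemma x0_pow4 : x0 ^ 4 = ⟨r4, i4⟩ := by
  rw [show (4:ℕ) = 2 + 2 by norm_num, pow_add, x0_pow2, Complex.ext_iff]
  constructor <;> simp only [Complex.mul_re, Complex.mul_im] <;>
    norm_num [r2, i2, r4, i4]

lemma x0_pow5 : x0 ^ 5 = ⟨r5, i5⟩ := by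
  rw [show (5:ℕ) = 4 + 1 by norm_num, pow_add, pow_one, x0_pow4, Complex.ext_iff]
  constructor <;> simp only [Complex.mul_re, Complex.mul_im, x0] <;>
    norm_num [a0, b0, r4, i4, r5, i5]

lemma x0_pow6 : x0 ^ 6 = ⟨r6, i6⟩ := by
  rw [show (6:ℕ) = 3 + 3 by norm_num, pow_add, x0_pow3, Complex.ext_iff]
  constructor <;> simp only [Complex.mul_re, Complex.mul_im] <;>
    norm_num [r3, i3, r6, i6]

lemma eval_x0 : P.eval x0 = ⟨A, B⟩ := by
  rw [P_eval, x0_pow6, x0_pow5, x0_pow4, x0_pow2, Complex.ext_iff]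
  constructor <;>
    simp only [Complex.add_re, Complex.add_im, Complex.mul_re, Complex.mul_im, x0,
      Complex.one_re, Complex.one_im, Complex.re_ofNat, Complex.im_ofNat] <;>
    norm_num [a0, b0, r2, i2, r4, i4, r5, i5, r6, i6, A, B]

lemma norm_x0_le : ‖x0‖ ≤ 52775514 / 100000000 := by
  rw [show x0 = Complex.mk a0 b0 from rfl]
  rw [← Real.sqrt_sq (by norm_num : (0:ℝ) ≤ 52775514 / 100000000)]
  rw [Complex.norm_def]
  apply Real.sqrt_le_sqrt
  rw [Complex.normSq_mk]
  norm_num [a0, b0]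

lemma norm_eval_x0_lt : ‖P.eval x0‖ < (325386 / 100000000 : ℝ) ^ 6 := by
  rw [eval_x0]
  have h : ‖(⟨A, B⟩ : ℂ)‖ ^ 2 = A ^ 2 + B ^ 2 := by
    rw [Complex.sq_norm, Complex.normSq_mk]
    ring
  have hlt : A ^ 2 + B ^ 2 < ((325386 / 100000000 : ℝ) ^ 6) ^ 2 := by
    norm_num [A, B]
  nlinarith [norm_nonneg (⟨A, B⟩ : ℂ), h, hlt]

theorem sqrt3_radius_between :
    ∃ z : ℂ,
      z ^ 6 + 2 * z ^ 5 + 3 * z ^ 4 + 3 * z ^ 2 + 2 * z + 1 = 0 ∧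
      Rstar < ‖z‖ ∧ ‖z‖ < Rsqrt2 ∧
      ∀ w : ℂ, w ^ 6 + 2 * w ^ 5 + 3 * w ^ 4 + 3 * w ^ 2 + 2 * w + 1 = 0 → ‖z‖ ≤ ‖w‖ := by
  have hmem : ∀ w : ℂ, w ∈ P.roots ↔ w ^ 6 + 2 * w ^ 5 + 3 * w ^ 4 + 3 * w ^ 2 + 2 * w + 1 = 0 := by
    intro w
    rw [Polynomial.mem_roots P_ne_zero, Polynomial.IsRoot, P_eval]
  have hSne : P.roots.toFinset.Nonempty := by
    rw [Multiset.toFinset_nonempty]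
    intro h
    have hcard := P_card_roots
    rw [h] at hcard
    simp at hcard
  obtain ⟨z, hzS, hzmin⟩ := P.roots.toFinset.exists_min_image (fun w => ‖w‖) hSne
  have hz : z ^ 6 + 2 * z ^ 5 + 3 * z ^ 4 + 3 * z ^ 2 + 2 * z + 1 = 0 :=
    (hmem z).mp (Multiset.mem_toFinset.mp hzS)
  have hmin : ∀ w : ℂ, w ^ 6 + 2 * w ^ 5 + 3 * w ^ 4 + 3 * w ^ 2 + 2 * w + 1 = 0 → ‖z‖ ≤ ‖w‖ := by
    intro w hw
    exact hzmin w (Multiset.mem_toFinset.mpr ((hmem w).mpr hw))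
  refine ⟨z, hz, root_norm_gt z hz, ?_, hmin⟩
  -- upper bound by contradiction
  by_contra hcon
  push_neg at hcon
  -- every root has norm ≥ Rsqrt2
  have hall : ∀ ρ ∈ P.roots, (325386 / 100000000 : ℝ) ≤ ‖x0 - ρ‖ := by
    intro ρ hρ
    have h1 : Rsqrt2 ≤ ‖ρ‖ := le_trans hcon (hzmin ρ (Multiset.mem_toFinset.mpr hρ))
    have h2 : (531009 : ℝ) / 1000000 ≤ ‖ρ‖ := le_trans Rsqrt2_gt h1
    have h3 : ‖ρ‖ - ‖x0‖ ≤ ‖x0 - ρ‖ := by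
      have := norm_sub_norm_le ρ x0
      rw [← norm_neg (ρ - x0)] at this
      simpa [neg_sub] using this
    have h4 := norm_x0_le
    linarith
  have hprod : (325386 / 100000000 : ℝ) ^ 6 ≤ ‖P.eval x0‖ := by
    conv_rhs => rw [P_eq_prod]
    rw [Polynomial.eval_multiset_prod, Multiset.map_map]
    have : (P.roots.map fun ρ => Polynomial.eval x0 (X - C ρ)) = P.roots.map fun ρ => x0 - ρ := by
      apply Multiset.map_congr rfl
      intro ρ _
      simp
    rw [Function.comp_def]
    simp only [Polynomial.eval_sub, Polynomial.eval_X, Polynomial.eval_C]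
    have hcard : Multiset.card (P.roots.map fun ρ => x0 - ρ) = 6 := by
      rw [Multiset.card_map, P_card_roots]
    calc (325386 / 100000000 : ℝ) ^ 6
        = (325386 / 100000000 : ℝ) ^ Multiset.card (P.roots.map fun ρ => x0 - ρ) := by rw [hcard]
      _ ≤ ‖(P.roots.map fun ρ => x0 - ρ).prod‖ := by
          apply prod_lb _ _ (by norm_num)
          intro x hx
          obtain ⟨ρ, hρ, rfl⟩ := Multiset.mem_map.mp hx
          exact hall ρ hρ
  linarith [norm_eval_x0_lt]
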